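/- Let G be a graph on n vertices and let S_1, S_2, ..., S_k be a sequence of disjoint independent sets partitioning V(G) such that for every t ≤ k, S_1 ∪ ... ∪ S_t induces a maximum t-colorable subgraph of G (i.e., has the maximum number of vertices among all subsets of V that can be properly t-colored). Then the entropy of the distribution (|S_1|/n, ..., |S_k|/n) is a lower bound on the entropy of every proper coloring of G. -/

import Mathlib

open scoped BigOperators

open Finset

private lemma abel_aux (c d : ℕ → ℝ) (hc : Monotone c) (m : ℕ)
    (hD : ∀ t ≤ m, 0 ≤ ∑ j ∈ range t, d j) :
    ∀ t ≤ m, ∑ j ∈ range t, d j * c j ≤ (∑ j ∈ range t, d j) * c t := by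
  intro t
  induction t with
  | zero => simp
  | succ t ih =>
    intro ht
    have ht' : t ≤ m := le_of_lt (Nat.lt_of_lt_of_le (Nat.lt_succ_self t) ht)
    rw [Finset.sum_range_succ, Finset.sum_range_succ]
    calc (∑ j ∈ range t, d j * c j) + d t * c t
        ≤ (∑ j ∈ range t, d j) * c t + d t * c t := by
          gcongr
          calc ∑ j ∈ range t, d j * c j ≤ (∑ j ∈ range t, d j) * c t := ih ht'
            _ ≤ (∑ j ∈ range t, d j) * c t := le_rfl
      _ = ((∑ j ∈ range t, d j) + d t) * c (t+1)
          - ((∑ j ∈ range t, d j) + d t) * (c (t+1) - c t) := by ring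
      _ ≤ ((∑ j ∈ range t, d j) + d t) * c (t+1) := by
          have h1 : 0 ≤ (∑ j ∈ range t, d j) + d t := by
            have := hD (t+1) ht
            rwa [Finset.sum_range_succ] at this
          nlinarith [hc (Nat.le_succ t), mul_nonneg h1 (sub_nonneg.2 (hc (Nat.le_succ t)))]

private lemma abel_main (c d : ℕ → ℝ) (hc : Monotone c) (m : ℕ)
    (hD : ∀ t ≤ m, 0 ≤ ∑ j ∈ range t, d j)
    (htot : ∑ j ∈ range m, d j = 0) :
    ∑ j ∈ range m, d j * c j ≤ 0 := by
  have := abel_aux c d hc m hD m le_rfl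
  rwa [htot, zero_mul] at this

private lemma gibbs (A B : ℕ → ℝ) (m N : ℕ) (hmN : m ≤ N)
    (hA0 : ∀ j, 0 ≤ A j) (hAm : ∀ j, m ≤ j → A j = 0)
    (hBpos : ∀ j, j < m → 0 < B j)
    (hAsum : ∑ j ∈ range N, A j = 1) (hBsum : ∑ j ∈ range m, B j = 1) :
    ∑ j ∈ range N, (A j * Real.log (B j) - A j * Real.log (A j)) ≤ 0 := by
  have key : ∀ j ∈ range N, A j * Real.log (B j) - A j * Real.log (A j)
      ≤ (if j < m then B j else 0) - A j := by
    intro j _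
    by_cases hjm : j < m
    · simp only [if_pos hjm]
      rcases eq_or_lt_of_le (hA0 j) with h0 | h0
      · rw [← h0]; simpa using le_of_lt (hBpos j hjm)
      · have hb := hBpos j hjm
        have hlog : Real.log (B j) - Real.log (A j) = Real.log (B j / A j) :=
          (Real.log_div (ne_of_gt hb) (ne_of_gt h0)).symm
        rw [← mul_sub, hlog]
        have hle := Real.log_le_sub_one_of_pos (div_pos hb h0)
        calc A j * Real.log (B j / A j) ≤ A j * (B j / A j - 1) :=
              mul_le_mul_of_nonneg_left hle (le_of_lt h0)
          _ = B j - A j := by field_simp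
    · rw [hAm j (le_of_not_gt hjm), if_neg hjm]
      simp
  calc ∑ j ∈ range N, (A j * Real.log (B j) - A j * Real.log (A j))
      ≤ ∑ j ∈ range N, ((if j < m then B j else 0) - A j) := Finset.sum_le_sum key
    _ = (∑ j ∈ range N, if j < m then B j else 0) - ∑ j ∈ range N, A j := by
        rw [Finset.sum_sub_distrib]
    _ = (∑ j ∈ range m, B j) - ∑ j ∈ range N, A j := by
        congr 1
        rw [← Finset.sum_filter]
        apply Finset.sum_congr _ (fun _ _ => rfl)
        ext j
        simp only [mem_filter, mem_range]
        omega
    _ = 0 := by rw [hAsum, hBsum]; ring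

private lemma image_fin_filter {k t : ℕ} (ht : t ≤ k) :
    (Finset.univ.filter (fun i : Fin k => (i : ℕ) < t)).image Fin.val = Finset.range t := by
  ext j
  simp only [Finset.mem_image, Finset.mem_filter, Finset.mem_univ, true_and, Finset.mem_range]
  constructor
  · rintro ⟨i, hi, rfl⟩; exact hi
  · intro hj; exact ⟨⟨j, lt_of_lt_of_le hj ht⟩, hj, rfl⟩

private lemma sum_fin_filter {M : Type*} [AddCommMonoid M] {k t : ℕ} (ht : t ≤ k) (f : ℕ → M) :
    ∑ i ∈ Finset.univ.filter (fun i : Fin k => (i : ℕ) < t), f (i : ℕ)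
      = ∑ i ∈ Finset.range t, f i := by
  rw [← image_fin_filter ht, Finset.sum_image (fun a _ b _ h => Fin.val_injective h)]


/-- If disjoint independent sets `S 0, …, S (k-1)` partition `V(G)` such that for
every `t ≤ k` the first `t` sets induce a maximum `t`-colorable subgraph, then
the entropy of the distribution `(|S i|/n)` is a lower bound on the entropy of
every proper coloring of `G`. -/
theorem stmt_15 {V : Type*} [Fintype V] [DecidableEq V] [Nonempty V]
    (G : SimpleGraph V) (n : ℕ) (hn : n = Fintype.card V)
    (k : ℕ) (S : Fin k → Finset V)
    (hdisj : ∀ i j, i ≠ j → Disjoint (S i) (S j))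
    (hpart : ∀ v : V, ∃ i, v ∈ S i)
    (hind : ∀ i, ∀ a ∈ S i, ∀ b ∈ S i, ¬G.Adj a b)
    (hmax : ∀ t : ℕ, t ≤ k → ∀ W : Finset V,
      (∃ c : V → Fin t, ∀ a ∈ W, ∀ b ∈ W, G.Adj a b → c a ≠ c b) →
      W.card ≤ ∑ i ∈ Finset.univ.filter (fun i : Fin k => (i : ℕ) < t), (S i).card)
    (ψ : V → ℕ) (hψ : ∀ a b, G.Adj a b → ψ a ≠ ψ b) :
    -∑ i : Fin k, (((S i).card : ℝ) / n) * Real.logb 2 (((S i).card : ℝ) / n)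
      ≤ -∑ c ∈ Finset.univ.image ψ,
          (((Finset.univ.filter (fun v => ψ v = c)).card : ℝ) / n) *
            Real.logb 2 (((Finset.univ.filter (fun v => ψ v = c)).card : ℝ) / n) := by
  classical
  have hn0 : 0 < n := hn ▸ Fintype.card_pos
  have hn0' : (0:ℝ) < n := by exact_mod_cast hn0
  set C : Finset ℕ := Finset.univ.image ψ with hC
  set Q : ℕ → Finset V := fun c => Finset.univ.filter (fun v => ψ v = c) with hQdef
  set m : ℕ := C.card with hmdef
  -- partitions
  have hQsum : ∑ c ∈ C, (Q c).card = n := by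
    rw [hn, ← Finset.card_univ]
    exact (Finset.card_eq_sum_card_fiberwise
      (fun v _ => Finset.mem_image_of_mem ψ (mem_univ v))).symm
  have hSsum : ∑ i : Fin k, (S i).card = n := by
    rw [hn, ← Finset.card_univ]
    have huniv : (Finset.univ : Finset V) = Finset.univ.biUnion S := by
      ext v
      simp only [Finset.mem_biUnion, mem_univ, true_iff]
      obtain ⟨i, hi⟩ := hpart v
      exact ⟨i, by simp [hi]⟩
    rw [huniv, Finset.card_biUnion (fun i _ j _ hij => hdisj i j hij)]
  -- sorted enumeration of colors
  set e0 : Fin m ≃o {x // x ∈ C} := C.orderIsoOfFin rfl with he0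
  set g : Fin m → ℕ := fun j => (Q ((e0 j : ℕ))).card with hg
  set σ : Equiv.Perm (Fin m) := Tuple.sort g with hσ
  set ecol : Fin m → ℕ := fun j => ((e0 (σ j.rev)) : ℕ) with hecol
  set gs : Fin m → ℕ := fun j => g (σ j.rev) with hgs
  have hgsQ : ∀ j, gs j = (Q (ecol j)).card := fun j => rfl
  have hgs_anti : ∀ i j : Fin m, i ≤ j → gs j ≤ gs i := by
    intro i j hij
    exact Tuple.monotone_sort g (Fin.rev_le_rev.mpr hij)
  have hecol_inj : Function.Injective ecol := by
    intro a b hab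
    have : e0 (σ a.rev) = e0 (σ b.rev) := Subtype.ext hab
    have := σ.injective (e0.injective this)
    exact Fin.rev_injective this
  have hecol_mem : ∀ j, ecol j ∈ C := fun j => (e0 (σ j.rev)).2
  have hQpos : ∀ c ∈ C, 0 < (Q c).card := by
    intro c hc
    rw [Finset.card_pos]
    obtain ⟨v, _, hv⟩ := Finset.mem_image.mp hc
    exact ⟨v, by simp [hQdef, hv]⟩
  have hgs_pos : ∀ j, 0 < gs j := fun j => hQpos _ (hecol_mem j)
  have hgs_sum : ∑ j : Fin m, gs j = n := by
    have h1 : ∑ j : Fin m, gs j = ∑ j : Fin m, g j :=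
      Equiv.sum_comp (Fin.revPerm.trans σ) g
    have h2 : ∑ j : Fin m, g j = ∑ c ∈ C, (Q c).card := by
      rw [← Finset.sum_coe_sort C (fun c => (Q c).card)]
      exact Equiv.sum_comp e0.toEquiv (fun c => (Q (c : ℕ)).card)
    rw [h1, h2, hQsum]
  -- real-valued distributions
  obtain ⟨A, hAval, hAzeroK⟩ :
      ∃ A : ℕ → ℝ, (∀ i : Fin k, A (i : ℕ) = ((S i).card : ℝ) / n) ∧
        (∀ i, k ≤ i → A i = 0) := by
    refine ⟨fun i => if h : i < k then ((S ⟨i, h⟩).card : ℝ) / n else 0,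
      fun i => ?_, fun i hi => ?_⟩
    · show dite _ _ _ = _
      rw [dif_pos i.isLt]
    · exact dif_neg (not_lt.2 hi)
  obtain ⟨B, hBval, hBzeroM⟩ :
      ∃ B : ℕ → ℝ, (∀ j : Fin m, B (j : ℕ) = ((gs j : ℕ) : ℝ) / n) ∧
        (∀ j, m ≤ j → B j = 0) := by
    refine ⟨fun j => if h : j < m then ((gs ⟨j, h⟩ : ℕ) : ℝ) / n else 0,
      fun j => ?_, fun j hj => ?_⟩
    · show dite _ _ _ = _
      rw [dif_pos j.isLt]
    · exact dif_neg (not_lt.2 hj)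
  have hA0 : ∀ i, 0 ≤ A i := by
    intro i
    by_cases h : i < k
    · rw [hAval ⟨i, h⟩]
      exact div_nonneg (Nat.cast_nonneg _) (Nat.cast_nonneg _)
    · rw [hAzeroK i (not_lt.1 h)]
  have hBpos : ∀ j, j < m → 0 < B j := by
    intro j hj
    rw [hBval ⟨j, hj⟩]
    exact div_pos (by exact_mod_cast hgs_pos ⟨j, hj⟩) hn0'
  have hB0 : ∀ j, 0 ≤ B j := by
    intro j
    by_cases h : j < m
    · exact le_of_lt (hBpos j h)
    · rw [hBzeroM j (not_lt.1 h)]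
  have hAsum : ∑ i ∈ range k, A i = 1 := by
    rw [← Fin.sum_univ_eq_sum_range A k, Finset.sum_congr rfl (fun i _ => hAval i),
      ← Finset.sum_div, ← Nat.cast_sum, hSsum]
    field_simp
  have hBsum : ∑ j ∈ range m, B j = 1 := by
    rw [← Fin.sum_univ_eq_sum_range B m, Finset.sum_congr rfl (fun j _ => hBval j),
      ← Finset.sum_div, ← Nat.cast_sum, hgs_sum]
    field_simp
  -- partial sum identities
  have hArange : ∀ t, t ≤ k → ∑ i ∈ range t, A i
      = (∑ i ∈ Finset.univ.filter (fun i : Fin k => (i : ℕ) < t), ((S i).card : ℝ)) / n := by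
    intro t ht
    rw [← sum_fin_filter ht A, Finset.sum_div]
    exact Finset.sum_congr rfl (fun i _ => hAval i)
  have hBrange : ∀ t, t ≤ m → ∑ j ∈ range t, B j
      = (∑ j ∈ Finset.univ.filter (fun j : Fin m => (j : ℕ) < t), ((gs j : ℕ) : ℝ)) / n := by
    intro t ht
    rw [← sum_fin_filter ht B, Finset.sum_div]
    exact Finset.sum_congr rfl (fun j _ => hBval j)
  -- the whole graph is m-colorable
  have hcolall : ∃ c : V → Fin m, ∀ a ∈ (Finset.univ : Finset V), ∀ b ∈ (Finset.univ : Finset V),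
      G.Adj a b → c a ≠ c b := by
    refine ⟨fun v => e0.symm ⟨ψ v, Finset.mem_image_of_mem ψ (mem_univ v)⟩, ?_⟩
    intro a _ b _ hab hcc
    apply hψ a b hab
    have := congrArg e0 hcc
    rw [OrderIso.apply_symm_apply, OrderIso.apply_symm_apply] at this
    exact congrArg Subtype.val this
  have hfull : m ≤ k → 1 ≤ ∑ i ∈ range m, A i := by
    intro hmk
    have h := hmax m hmk Finset.univ hcolall
    rw [hArange m hmk, le_div_iff₀ hn0', one_mul]
    have h' : n ≤ ∑ i ∈ Finset.univ.filter (fun i : Fin k => (i : ℕ) < m), (S i).card := by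
      rw [hn, ← Finset.card_univ]; exact h
    exact_mod_cast h'
  have hAm1 : ∑ i ∈ range m, A i = 1 := by
    rcases le_or_gt m k with hmk | hkm
    · refine le_antisymm ?_ (hfull hmk)
      rw [← hAsum]
      exact Finset.sum_le_sum_of_subset_of_nonneg (Finset.range_subset_range.2 hmk)
        (fun i _ _ => hA0 i)
    · rw [← hAsum]
      symm
      refine Finset.sum_subset (Finset.range_subset_range.2 (le_of_lt hkm)) ?_
      intro j _ hj
      exact hAzeroK j (by simpa using hj)
  have hAzeroM : ∀ j, m ≤ j → A j = 0 := by
    intro j hj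
    by_cases hjk : j < k
    · have hmk : m ≤ k := le_of_lt (lt_of_le_of_lt hj hjk)
      have hIco : ∑ i ∈ Finset.Ico m k, A i = 0 := by
        have hsplit : ∑ i ∈ range m, A i + ∑ i ∈ Finset.Ico m k, A i = ∑ i ∈ range k, A i :=
          Finset.sum_range_add_sum_Ico A hmk
        rw [hAm1, hAsum] at hsplit
        linarith
      exact (Finset.sum_eq_zero_iff_of_nonneg (fun i _ => hA0 i)).1 hIco j
        (Finset.mem_Ico.2 ⟨hj, hjk⟩)
    · exact hAzeroK j (not_lt.1 hjk)
  -- domination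
  have hdom : ∀ t, ∑ j ∈ range t, B j ≤ ∑ i ∈ range t, A i := by
    intro t
    rcases le_or_gt m t with hmt | htm
    · have hBt : ∑ j ∈ range t, B j = 1 := by
        rw [← hBsum]
        symm
        refine Finset.sum_subset (Finset.range_subset_range.2 hmt) ?_
        intro j _ hj
        exact hBzeroM j (by simpa using hj)
      rw [hBt]
      rcases le_or_gt k t with hkt | htk
      · have hAt : ∑ i ∈ range t, A i = 1 := by
          rw [← hAsum]
          symm
          refine Finset.sum_subset (Finset.range_subset_range.2 hkt) ?_
          intro j _ hj
          exact hAzeroK j (by simpa using hj)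
        rw [hAt]
      · calc (1:ℝ) = ∑ i ∈ range m, A i := hAm1.symm
          _ ≤ ∑ i ∈ range t, A i :=
            Finset.sum_le_sum_of_subset_of_nonneg (Finset.range_subset_range.2 hmt)
              (fun i _ _ => hA0 i)
    · rcases le_or_gt k t with hkt | htk
      · have hAt : ∑ i ∈ range t, A i = 1 := by
          rw [← hAsum]
          symm
          refine Finset.sum_subset (Finset.range_subset_range.2 hkt) ?_
          intro j _ hj
          exact hAzeroK j (by simpa using hj)
        rw [hAt]
        calc ∑ j ∈ range t, B j
            ≤ ∑ j ∈ range m, B j :=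
              Finset.sum_le_sum_of_subset_of_nonneg (Finset.range_subset_range.2 (le_of_lt htm))
                (fun j _ _ => hB0 j)
          _ = 1 := hBsum
      · -- main case : t < k, t < m
        rcases Nat.eq_zero_or_pos t with rfl | ht0
        · simp
        set F : Finset (Fin m) := Finset.univ.filter (fun j : Fin m => (j : ℕ) < t) with hF
        set W : Finset V := F.biUnion (fun j => Q (ecol j)) with hW
        have hQdisj : ∀ c d : ℕ, c ≠ d → Disjoint (Q c) (Q d) := by
          intro c d hcd
          rw [Finset.disjoint_left]
          intro v hv hv2
          simp only [hQdef, Finset.mem_filter, Finset.mem_univ, true_and] at hv hv2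
          exact hcd (hv ▸ hv2 ▸ rfl)
        have hWcard : W.card = ∑ j ∈ F, (Q (ecol j)).card :=
          Finset.card_biUnion (fun a _ b _ hab => hQdisj _ _ (fun h => hab (hecol_inj h)))
        have hcolW : ∃ c : V → Fin t, ∀ a ∈ W, ∀ b ∈ W, G.Adj a b → c a ≠ c b := by
          refine ⟨fun v => if h : ∃ j : Fin t, ψ v = ecol ⟨(j : ℕ), lt_trans j.2 htm⟩
            then h.choose else ⟨0, ht0⟩, ?_⟩
          have hmem : ∀ v ∈ W, ∃ j : Fin t, ψ v = ecol ⟨(j : ℕ), lt_trans j.2 htm⟩ := by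
            intro v hv
            rw [hW, Finset.mem_biUnion] at hv
            obtain ⟨j, hjF, hvQ⟩ := hv
            have hjt : (j : ℕ) < t := by
              rw [hF] at hjF; simpa using hjF
            have hvj : ψ v = ecol j := by
              simpa only [hQdef, Finset.mem_filter, Finset.mem_univ, true_and] using hvQ
            exact ⟨⟨(j : ℕ), hjt⟩, hvj.trans (congrArg ecol (Fin.ext rfl))⟩
          intro a ha b hb hab hcc
          have ha' := hmem a ha
          have hb' := hmem b hb
          apply hψ a b hab
          simp only [dif_pos ha', dif_pos hb'] at hcc
          rw [ha'.choose_spec, hb'.choose_spec]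
          exact congrArg ecol (by rw [hcc])
        have hc := hmax t (le_of_lt htk) W hcolW
        rw [hBrange t (le_of_lt htm), hArange t (le_of_lt htk)]
        have h1 : ∑ j ∈ Finset.univ.filter (fun j : Fin m => (j : ℕ) < t), ((gs j : ℕ) : ℝ)
            = (W.card : ℝ) := by
          rw [← hF, hWcard]
          push_cast
          exact Finset.sum_congr rfl (fun j _ => by rw [hgsQ j])
        have h2 : (W.card : ℝ) ≤ ∑ i ∈ Finset.univ.filter (fun i : Fin k => (i : ℕ) < t),
            ((S i).card : ℝ) := by exact_mod_cast hc
        rw [h1]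
        exact div_le_div_of_nonneg_right h2 hn0'.le
  -- Gibbs step
  set N : ℕ := max k m with hN
  have hANsum : ∑ j ∈ range N, A j = 1 := by
    rw [← hAsum]
    symm
    refine Finset.sum_subset (Finset.range_subset_range.2 (le_max_left k m)) ?_
    intro j _ hj
    exact hAzeroK j (by simpa using hj)
  have hgib := gibbs A B m N (le_max_right k m) hA0 hAzeroM hBpos hANsum hBsum
  have e1 : ∑ j ∈ range N, A j * Real.log (A j) = ∑ j ∈ range k, A j * Real.log (A j) := by
    symm
    refine Finset.sum_subset (Finset.range_subset_range.2 (le_max_left k m)) ?_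
    intro j _ hj
    rw [hAzeroK j (by simpa using hj), zero_mul]
  have e2 : ∑ j ∈ range N, A j * Real.log (B j) = ∑ j ∈ range m, A j * Real.log (B j) := by
    symm
    refine Finset.sum_subset (Finset.range_subset_range.2 (le_max_right k m)) ?_
    intro j _ hj
    rw [hAzeroM j (by simpa using hj), zero_mul]
  rw [Finset.sum_sub_distrib, e2, e1] at hgib
  -- Abel step
  have hm0 : 0 < m := by
    rw [hmdef, Finset.card_pos]
    obtain ⟨v⟩ := ‹Nonempty V›
    exact ⟨ψ v, Finset.mem_image_of_mem ψ (mem_univ v)⟩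
  have hBanti : ∀ s t : ℕ, s ≤ t → t < m → B t ≤ B s := by
    intro s t hst htm'
    have hsm : s < m := lt_of_le_of_lt hst htm'
    rw [hBval ⟨s, hsm⟩, hBval ⟨t, htm'⟩]
    exact div_le_div_of_nonneg_right
      (by exact_mod_cast hgs_anti ⟨s, hsm⟩ ⟨t, htm'⟩ hst) hn0'.le
  have hcmono : Monotone (fun j : ℕ => -Real.log (B (min j (m-1)))) := by
    intro i j hij
    dsimp only
    have hj' : min j (m-1) < m := by omega
    have hle : B (min j (m-1)) ≤ B (min i (m-1)) :=
      hBanti _ _ (by omega) hj'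
    exact neg_le_neg (Real.log_le_log (hBpos _ hj') hle)
  have htot : ∑ j ∈ range m, (A j - B j) = 0 := by
    rw [Finset.sum_sub_distrib, hAm1, hBsum]; ring
  have hD : ∀ t ≤ m, 0 ≤ ∑ j ∈ range t, (A j - B j) := by
    intro t _
    rw [Finset.sum_sub_distrib]
    exact sub_nonneg.2 (hdom t)
  have habel := abel_main _ _ hcmono m hD htot
  have habel' : ∑ j ∈ range m, (A j - B j) * (-Real.log (B j)) ≤ 0 := by
    refine le_trans (le_of_eq (Finset.sum_congr rfl ?_)) habel
    intro j hj
    have hjm : min j (m-1) = j := by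
      have := Finset.mem_range.1 hj; omega
    rw [hjm]
  have hstep2 : -∑ j ∈ range m, A j * Real.log (B j)
      ≤ -∑ j ∈ range m, B j * Real.log (B j) := by
    have hexp : ∑ j ∈ range m, (A j - B j) * (-Real.log (B j))
        = ∑ j ∈ range m, B j * Real.log (B j) - ∑ j ∈ range m, A j * Real.log (B j) := by
      rw [← Finset.sum_sub_distrib]
      exact Finset.sum_congr rfl (fun j _ => by ring)
    rw [hexp] at habel'
    linarith
  have hmain : -∑ j ∈ range k, A j * Real.log (A j)
      ≤ -∑ j ∈ range m, B j * Real.log (B j) := by linarith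
  -- convert natural log to logb 2
  have hlog2 : (0:ℝ) < Real.log 2 := Real.log_pos one_lt_two
  have eL : ∑ i : Fin k, (((S i).card : ℝ) / n) * Real.logb 2 (((S i).card : ℝ) / n)
      = (∑ j ∈ range k, A j * Real.log (A j)) / Real.log 2 := by
    rw [← Fin.sum_univ_eq_sum_range (fun j => A j * Real.log (A j)) k, Finset.sum_div]
    refine Finset.sum_congr rfl (fun i _ => ?_)
    rw [hAval i, Real.logb]
    ring
  have eR : ∑ c ∈ C, (((Q c).card : ℝ) / n) * Real.logb 2 (((Q c).card : ℝ) / n)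
      = (∑ j ∈ range m, B j * Real.log (B j)) / Real.log 2 := by
    rw [← Finset.sum_coe_sort C
      (fun c => (((Q c).card : ℝ) / n) * Real.logb 2 (((Q c).card : ℝ) / n))]
    have s1 : ∑ c : {x // x ∈ C}, (((Q (c : ℕ)).card : ℝ) / n) * Real.logb 2 (((Q (c : ℕ)).card : ℝ) / n)
        = ∑ j : Fin m, (((Q ((e0 j : ℕ))).card : ℝ) / n) * Real.logb 2 (((Q ((e0 j : ℕ))).card : ℝ) / n) := by
      rw [← Equiv.sum_comp e0.toEquiv
        (fun c : {x // x ∈ C} => (((Q (c : ℕ)).card : ℝ) / n) * Real.logb 2 (((Q (c : ℕ)).card : ℝ) / n))]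
      exact Finset.sum_congr rfl (fun j _ => rfl)
    have s2 : ∑ j : Fin m, (((Q ((e0 j : ℕ))).card : ℝ) / n) * Real.logb 2 (((Q ((e0 j : ℕ))).card : ℝ) / n)
        = ∑ j : Fin m, (((gs j : ℕ) : ℝ) / n) * Real.logb 2 (((gs j : ℕ) : ℝ) / n) := by
      rw [← Equiv.sum_comp (Fin.revPerm.trans σ)
        (fun j : Fin m => (((Q ((e0 j : ℕ))).card : ℝ) / n) * Real.logb 2 (((Q ((e0 j : ℕ))).card : ℝ) / n))]
      exact Finset.sum_congr rfl (fun j _ => rfl)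
    have s3 : ∑ j : Fin m, (((gs j : ℕ) : ℝ) / n) * Real.logb 2 (((gs j : ℕ) : ℝ) / n)
        = ∑ j ∈ range m, B j * Real.log (B j) / Real.log 2 := by
      rw [← Fin.sum_univ_eq_sum_range (fun j => B j * Real.log (B j) / Real.log 2) m]
      refine Finset.sum_congr rfl (fun j _ => ?_)
      rw [← hBval j, Real.logb]
      ring
    rw [s1, s2, s3, ← Finset.sum_div]
  rw [eL]
  have goalR : ∑ c ∈ C,
      (((Finset.univ.filter (fun v => ψ v = c)).card : ℝ) / n) *
        Real.logb 2 (((Finset.univ.filter (fun v => ψ v = c)).card : ℝ) / n)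
      = (∑ j ∈ range m, B j * Real.log (B j)) / Real.log 2 := eR
  rw [goalR, ← neg_div, ← neg_div]
  exact div_le_div_of_nonneg_right hmain hlog2.le
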